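/- For every Wang tile set τ that admits a tiling of the plane, there exist a tiling α of the plane by τ and a constant C ∈ ℕ such that for every n ≥ 1, the number of distinct n × n blocks occurring in α (over all positions (i,j) ∈ ℤ²) is at most 2^(C·n). -/

import Mathlib

/-- A Wang tile set: a finite (enumerable) set of tiles, a finite set of colors,
and the four side colors of each tile. -/
structure WangTileSet where
  Tile : Type
  Color : Type
  fintypeTile : Fintype Tile
  decEqTile : DecidableEq Tile
  encodableTile : Encodable Tile
  fintypeColor : Fintype Color
  north : Tile → Color
  south : Tile → Color
  east : Tile → Color
  west : Tile → Color

attribute [instance] WangTileSet.fintypeTile WangTileSet.decEqTile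
  WangTileSet.encodableTile WangTileSet.fintypeColor

/-- `f` is a tiling of the plane by the Wang tile set `W`. -/
def WangTileSet.IsTiling (W : WangTileSet) (f : ℤ × ℤ → W.Tile) : Prop :=
  ∀ i j : ℤ,
    W.east (f (i, j)) = W.west (f (i + 1, j)) ∧
    W.north (f (i, j)) = W.south (f (i, j + 1))

/-- The `n × n` block of `f` at position `(i, j)`. -/
def WangTileSet.block (W : WangTileSet) (f : ℤ × ℤ → W.Tile) (n : ℕ) (i j : ℤ) :
    Fin n × Fin n → W.Tile :=
  fun p => f (i + (p.1 : ℤ), j + (p.2 : ℤ))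

/-- Plain Kolmogorov complexity of a natural number: the least size of a code
evaluating to it on input `0`. -/
noncomputable def K (m : ℕ) : ℕ :=
  sInf {k | ∃ c : Nat.Partrec.Code, c.eval 0 = Part.some m ∧ Nat.size (Encodable.encode c) = k}

namespace WangAux

variable (W : WangTileSet)

abbrev Sq (s : ℕ) := Fin s × Fin s → W.Tile

/-- Internal validity of an `s × s` square. -/
def SqValid (s : ℕ) (x : Sq W s) : Prop :=
  (∀ (a b : Fin s) (h : a.1 + 1 < s),
      W.east (x (a, b)) = W.west (x (⟨a.1 + 1, h⟩, b))) ∧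
  (∀ (a b : Fin s) (h : b.1 + 1 < s),
      W.north (x (a, b)) = W.south (x (a, ⟨b.1 + 1, h⟩)))

def wcol (s : ℕ) (x : Sq W s) : Fin s → W.Color :=
  fun j => W.west (x (⟨0, j.pos⟩, j))

def ecol (s : ℕ) (x : Sq W s) : Fin s → W.Color :=
  fun j => W.east (x (⟨s - 1, Nat.sub_lt j.pos Nat.one_pos⟩, j))

def scol (s : ℕ) (x : Sq W s) : Fin s → W.Color :=
  fun i => W.south (x (i, ⟨0, i.pos⟩))

def ncol (s : ℕ) (x : Sq W s) : Fin s → W.Color :=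
  fun i => W.north (x (i, ⟨s - 1, Nat.sub_lt i.pos Nat.one_pos⟩))

abbrev EData (s : ℕ) :=
  (Fin s → W.Color) × (Fin s → W.Color) × (Fin s → W.Color) × (Fin s → W.Color)

def edges (s : ℕ) (x : Sq W s) : EData W s :=
  (wcol W s x, ecol W s x, scol W s x, ncol W s x)

/-- The residue of `i` modulo `s`, as an element of `Fin s`. -/
def coordFin (s : ℕ) (hs : 0 < s) (i : ℤ) : Fin s :=
  ⟨(i % (s : ℤ)).toNat, by
    have hs' : ((s : ℤ)) ≠ 0 := by exact_mod_cast hs.ne'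
    have h1 : 0 ≤ i % (s : ℤ) := Int.emod_nonneg i hs'
    have h2 : i % (s : ℤ) < s := Int.emod_lt_of_pos i (by exact_mod_cast hs)
    omega⟩

/-- The aligned `s × s` square of `f` at grid position `(a, b)`. -/
def sqAt (s : ℕ) (f : ℤ × ℤ → W.Tile) (a b : ℤ) : Sq W s :=
  fun p => f ((s : ℤ) * a + (p.1.1 : ℤ), (s : ℤ) * b + (p.2.1 : ℤ))

/-- Replace every aligned `s × s` square of `f` by its image under `φ`. -/
def resurf (s : ℕ) (hs : 0 < s) (φ : Sq W s → Sq W s) (f : ℤ × ℤ → W.Tile) :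
    ℤ × ℤ → W.Tile :=
  fun q => φ (sqAt W s f (q.1 / (s : ℤ)) (q.2 / (s : ℤ)))
    (coordFin s hs q.1, coordFin s hs q.2)

lemma div_coord (s : ℕ) (hs : 0 < s) (a : ℤ) (r : ℕ) (hr : r < s) :
    ((s : ℤ) * a + (r : ℤ)) / (s : ℤ) = a ∧ ((s : ℤ) * a + (r : ℤ)) % (s : ℤ) = r := by
  have hs' : ((s : ℤ)) ≠ 0 := by exact_mod_cast hs.ne'
  have h0 : (0 : ℤ) ≤ r := Int.natCast_nonneg r
  have h1 : (r : ℤ) < s := by exact_mod_cast hr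
  constructor
  · rw [add_comm, Int.add_mul_ediv_left _ _ hs', Int.ediv_eq_zero_of_lt h0 h1, zero_add]
  · rw [add_comm, Int.add_mul_emod_self_left, Int.emod_eq_of_lt h0 h1]

lemma coord_spec (s : ℕ) (hs : 0 < s) (i : ℤ) :
    (s : ℤ) * (i / (s : ℤ)) + ((coordFin s hs i).1 : ℤ) = i := by
  have hs' : ((s : ℤ)) ≠ 0 := by exact_mod_cast hs.ne'
  have h1 : 0 ≤ i % (s : ℤ) := Int.emod_nonneg i hs'
  have : ((coordFin s hs i).1 : ℤ) = i % (s : ℤ) := by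
    simp [coordFin, Int.toNat_of_nonneg h1]
  rw [this, Int.mul_ediv_add_emod]

lemma coordFin_eq (s : ℕ) (hs : 0 < s) (a : ℤ) (r : ℕ) (hr : r < s) :
    coordFin s hs ((s : ℤ) * a + (r : ℤ)) = ⟨r, hr⟩ := by
  apply Fin.ext
  show (((s : ℤ) * a + (r : ℤ)) % (s : ℤ)).toNat = r
  rw [(div_coord s hs a r hr).2]
  exact Int.toNat_natCast r

lemma sqAt_resurf (s : ℕ) (hs : 0 < s) (φ : Sq W s → Sq W s) (f : ℤ × ℤ → W.Tile)
    (a b : ℤ) : sqAt W s (resurf W s hs φ f) a b = φ (sqAt W s f a b) := by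
  funext p
  show φ (sqAt W s f (((s : ℤ) * a + (p.1.1 : ℤ)) / s) (((s : ℤ) * b + (p.2.1 : ℤ)) / s))
      (coordFin s hs ((s : ℤ) * a + (p.1.1 : ℤ)), coordFin s hs ((s : ℤ) * b + (p.2.1 : ℤ)))
      = φ (sqAt W s f a b) p
  rw [(div_coord s hs a p.1.1 p.1.2).1, (div_coord s hs b p.2.1 p.2.2).1,
    coordFin_eq s hs a p.1.1 p.1.2, coordFin_eq s hs b p.2.1 p.2.2]

end WangAux
namespace WangAux

variable (W : WangTileSet)

lemma resurf_eval (s : ℕ) (hs : 0 < s) (φ : Sq W s → Sq W s) (f : ℤ × ℤ → W.Tile)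
    (i j : ℤ) : resurf W s hs φ f (i, j)
      = φ (sqAt W s f (i / (s : ℤ)) (j / (s : ℤ))) (coordFin s hs i, coordFin s hs j) := rfl

lemma edges_parts {s : ℕ} {x y : Sq W s} (h : edges W s x = edges W s y) :
    wcol W s x = wcol W s y ∧ ecol W s x = ecol W s y ∧
      scol W s x = scol W s y ∧ ncol W s x = ncol W s y := by
  simpa [edges, Prod.ext_iff] using h

lemma resurf_tiling (s : ℕ) (hs : 0 < s) (φ : Sq W s → Sq W s) (f : ℤ × ℤ → W.Tile)
    (hf : W.IsTiling f)
    (hφv : ∀ a b : ℤ, SqValid W s (φ (sqAt W s f a b)))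
    (hφe : ∀ a b : ℤ, edges W s (φ (sqAt W s f a b)) = edges W s (sqAt W s f a b)) :
    W.IsTiling (resurf W s hs φ f) := by
  intro i j
  set a := i / (s : ℤ) with ha
  set b := j / (s : ℤ) with hb
  set r := coordFin s hs i with hr
  set t := coordFin s hs j with ht
  have hi : (s : ℤ) * a + (r.1 : ℤ) = i := coord_spec s hs i
  have hj : (s : ℤ) * b + (t.1 : ℤ) = j := coord_spec s hs j
  have hdista : (s : ℤ) * (a + 1) = (s : ℤ) * a + s := by ring
  have hdistb : (s : ℤ) * (b + 1) = (s : ℤ) * b + s := by ring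
  constructor
  · -- east-west
    rcases Nat.lt_or_ge (r.1 + 1) s with h | h
    · have e1 : (i + 1) / (s : ℤ) = a := by
        rw [show i + 1 = (s : ℤ) * a + ((r.1 + 1 : ℕ) : ℤ) by push_cast; omega]
        exact (div_coord s hs a (r.1 + 1) h).1
      have e2 : coordFin s hs (i + 1) = ⟨r.1 + 1, h⟩ := by
        rw [show i + 1 = (s : ℤ) * a + ((r.1 + 1 : ℕ) : ℤ) by push_cast; omega]
        exact coordFin_eq s hs a (r.1 + 1) h
      rw [resurf_eval, resurf_eval, e1, e2, ← ha, ← hb, ← hr, ← ht]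
      exact (hφv a b).1 r t h
    · have hrv : r.1 = s - 1 := by have := r.2; omega
      have e1 : (i + 1) / (s : ℤ) = a + 1 := by
        rw [show i + 1 = (s : ℤ) * (a + 1) + ((0 : ℕ) : ℤ) by push_cast; omega]
        exact (div_coord s hs (a + 1) 0 hs).1
      have e2 : coordFin s hs (i + 1) = ⟨0, hs⟩ := by
        rw [show i + 1 = (s : ℤ) * (a + 1) + ((0 : ℕ) : ℤ) by push_cast; omega]
        exact coordFin_eq s hs (a + 1) 0 hs
      rw [resurf_eval, resurf_eval, e1, e2, ← ha, ← hb, ← hr, ← ht]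
      have L : W.east (φ (sqAt W s f a b) (r, t)) = ecol W s (φ (sqAt W s f a b)) t := by
        have hre : r = ⟨s - 1, Nat.sub_lt hs Nat.one_pos⟩ := Fin.ext hrv
        rw [hre]; rfl
      have R : W.west (φ (sqAt W s f (a + 1) b) (⟨0, hs⟩, t))
          = wcol W s (φ (sqAt W s f (a + 1) b)) t := rfl
      rw [L, R, (edges_parts W (hφe a b)).2.1, (edges_parts W (hφe (a + 1) b)).1]
      show W.east (f ((s : ℤ) * a + ((s - 1 : ℕ) : ℤ), (s : ℤ) * b + (t.1 : ℤ)))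
        = W.west (f ((s : ℤ) * (a + 1) + ((0 : ℕ) : ℤ), (s : ℤ) * b + (t.1 : ℤ)))
      have harith : (s : ℤ) * (a + 1) + ((0 : ℕ) : ℤ)
          = ((s : ℤ) * a + ((s - 1 : ℕ) : ℤ)) + 1 := by push_cast; omega
      rw [harith]
      exact (hf ((s : ℤ) * a + ((s - 1 : ℕ) : ℤ)) ((s : ℤ) * b + (t.1 : ℤ))).1
  · -- north-south
    rcases Nat.lt_or_ge (t.1 + 1) s with h | h
    · have e1 : (j + 1) / (s : ℤ) = b := by
        rw [show j + 1 = (s : ℤ) * b + ((t.1 + 1 : ℕ) : ℤ) by push_cast; omega]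
        exact (div_coord s hs b (t.1 + 1) h).1
      have e2 : coordFin s hs (j + 1) = ⟨t.1 + 1, h⟩ := by
        rw [show j + 1 = (s : ℤ) * b + ((t.1 + 1 : ℕ) : ℤ) by push_cast; omega]
        exact coordFin_eq s hs b (t.1 + 1) h
      rw [resurf_eval, resurf_eval, e1, e2, ← ha, ← hb, ← hr, ← ht]
      exact (hφv a b).2 r t h
    · have htv : t.1 = s - 1 := by have := t.2; omega
      have e1 : (j + 1) / (s : ℤ) = b + 1 := by
        rw [show j + 1 = (s : ℤ) * (b + 1) + ((0 : ℕ) : ℤ) by push_cast; omega]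
        exact (div_coord s hs (b + 1) 0 hs).1
      have e2 : coordFin s hs (j + 1) = ⟨0, hs⟩ := by
        rw [show j + 1 = (s : ℤ) * (b + 1) + ((0 : ℕ) : ℤ) by push_cast; omega]
        exact coordFin_eq s hs (b + 1) 0 hs
      rw [resurf_eval, resurf_eval, e1, e2, ← ha, ← hb, ← hr, ← ht]
      have L : W.north (φ (sqAt W s f a b) (r, t)) = ncol W s (φ (sqAt W s f a b)) r := by
        have hte : t = ⟨s - 1, Nat.sub_lt hs Nat.one_pos⟩ := Fin.ext htv
        rw [hte]; rfl
      have R : W.south (φ (sqAt W s f a (b + 1)) (r, ⟨0, hs⟩))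
          = scol W s (φ (sqAt W s f a (b + 1))) r := rfl
      rw [L, R, (edges_parts W (hφe a b)).2.2.2, (edges_parts W (hφe a (b + 1))).2.2.1]
      show W.north (f ((s : ℤ) * a + (r.1 : ℤ), (s : ℤ) * b + ((s - 1 : ℕ) : ℤ)))
        = W.south (f ((s : ℤ) * a + (r.1 : ℤ), (s : ℤ) * (b + 1) + ((0 : ℕ) : ℤ)))
      have harith : (s : ℤ) * (b + 1) + ((0 : ℕ) : ℤ)
          = ((s : ℤ) * b + ((s - 1 : ℕ) : ℤ)) + 1 := by push_cast; omega
      rw [harith]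
      exact (hf ((s : ℤ) * a + (r.1 : ℤ)) ((s : ℤ) * b + ((s - 1 : ℕ) : ℤ))).2

end WangAux
namespace WangAux

variable (W : WangTileSet)

/-- Quadrant `(c, d)` of a `2s × 2s` square. -/
def quad (s : ℕ) (x : Sq W (2 * s)) (c d : Fin 2) : Sq W s :=
  fun p => x (⟨c.1 * s + p.1.1, by
      have h1 := c.2; have h2 := p.1.2
      have : c.1 * s ≤ 1 * s := Nat.mul_le_mul_right s (by omega)
      omega⟩,
    ⟨d.1 * s + p.2.1, by
      have h1 := d.2; have h2 := p.2.2
      have : d.1 * s ≤ 1 * s := Nat.mul_le_mul_right s (by omega)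
      omega⟩)

lemma quad_sqAt (s : ℕ) (f : ℤ × ℤ → W.Tile) (A B : ℤ) (c d : Fin 2) :
    quad W s (sqAt W (2 * s) f A B) c d
      = sqAt W s f (2 * A + (c.1 : ℤ)) (2 * B + (d.1 : ℤ)) := by
  funext p
  show f (((2 * s : ℕ) : ℤ) * A + ((c.1 * s + p.1.1 : ℕ) : ℤ),
      ((2 * s : ℕ) : ℤ) * B + ((d.1 * s + p.2.1 : ℕ) : ℤ))
    = f ((s : ℤ) * (2 * A + (c.1 : ℤ)) + (p.1.1 : ℤ), (s : ℤ) * (2 * B + (d.1 : ℤ)) + (p.2.1 : ℤ))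
  congr 1
  rw [Prod.mk.injEq]
  constructor <;> (push_cast; ring)

lemma quad_valid (s : ℕ) (x : Sq W (2 * s)) (c d : Fin 2) (hx : SqValid W (2 * s) x) :
    SqValid W s (quad W s x c d) := by
  constructor
  · intro a b h
    have h' : (c.1 * s + a.1) + 1 < 2 * s := by
      have h1 := c.2
      have : c.1 * s ≤ 1 * s := Nat.mul_le_mul_right s (by omega)
      omega
    have := hx.1 ⟨c.1 * s + a.1, by omega⟩ ⟨d.1 * s + b.1, by
        have h1 := d.2; have h2 := b.2
        have : d.1 * s ≤ 1 * s := Nat.mul_le_mul_right s (by omega)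
        omega⟩ h'
    convert this using 3 <;> rfl
  · intro a b h
    have h' : (d.1 * s + b.1) + 1 < 2 * s := by
      have h1 := d.2
      have : d.1 * s ≤ 1 * s := Nat.mul_le_mul_right s (by omega)
      omega
    have := hx.2 ⟨c.1 * s + a.1, by
        have h1 := c.2; have h2 := a.2
        have : c.1 * s ≤ 1 * s := Nat.mul_le_mul_right s (by omega)
        omega⟩ ⟨d.1 * s + b.1, by omega⟩ h'
    convert this using 3 <;> rfl
end WangAux
namespace WangAux

variable (W : WangTileSet)

def scale : ℕ → ℕ
  | 0 => 1
  | m + 1 => 2 * scale m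

lemma scale_pos (m : ℕ) : 0 < scale m := by
  induction m with
  | zero => exact Nat.one_pos
  | succ m ih => simpa [scale] using Nat.mul_pos Nat.two_pos ih

lemma scale_eq (m : ℕ) : scale m = 2 ^ m := by
  induction m with
  | zero => rfl
  | succ m ih => rw [scale, ih, pow_succ]; ring

open Classical in
/-- Choose, for each edge datum, a canonical square in `V` with those edges (if any). -/
noncomputable def mkSel [Nonempty W.Tile] (s : ℕ) (V : Set (Sq W s)) (e : EData W s) :
    Sq W s :=
  if h : ∃ x, x ∈ V ∧ edges W s x = e then h.choose
  else fun _ => Classical.arbitrary W.Tile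

open Classical in
lemma mkSel_spec [Nonempty W.Tile] (s : ℕ) (V : Set (Sq W s)) (e : EData W s)
    (h : ∃ x, x ∈ V ∧ edges W s x = e) :
    mkSel W s V e ∈ V ∧ edges W s (mkSel W s V e) = e := by
  rw [mkSel, dif_pos h]
  exact h.choose_spec

/-- Hereditarily canonical squares at scale `2^m`. -/
noncomputable def VH [Nonempty W.Tile] : (m : ℕ) → Set (Sq W (scale m))
  | 0 => Set.univ
  | m + 1 => {x : Sq W (scale (m + 1)) | SqValid W (scale (m + 1)) x ∧
      ∀ c d : Fin 2, quad W (scale m) x c d ∈ VH m ∧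
        mkSel W (scale m) (VH m) (edges W (scale m) (quad W (scale m) x c d))
          = quad W (scale m) x c d}

noncomputable def sel [Nonempty W.Tile] (m : ℕ) : EData W (scale m) → Sq W (scale m) :=
  mkSel W (scale m) (VH W m)

def SEL [Nonempty W.Tile] (m : ℕ) : Set (Sq W (scale m)) :=
  {x | x ∈ VH W m ∧ sel W m (edges W (scale m) x) = x}

lemma VH_succ_iff [Nonempty W.Tile] (m : ℕ) (x : Sq W (scale (m + 1))) :
    x ∈ VH W (m + 1) ↔ SqValid W (scale (m + 1)) x ∧
      ∀ c d : Fin 2, quad W (scale m) x c d ∈ SEL W m := by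
  constructor
  · rintro ⟨h1, h2⟩
    exact ⟨h1, fun c d => ⟨(h2 c d).1, (h2 c d).2⟩⟩
  · rintro ⟨h1, h2⟩
    exact ⟨h1, fun c d => ⟨(h2 c d).1, (h2 c d).2⟩⟩

lemma VH_valid [Nonempty W.Tile] (m : ℕ) (x : Sq W (scale m)) (hx : x ∈ VH W m) :
    SqValid W (scale m) x := by
  cases m with
  | zero =>
    constructor <;>
      (intro a b h; have ha := a.2; have h0 : scale 0 = 1 := rfl; omega)
  | succ m => exact hx.1

lemma sel_spec [Nonempty W.Tile] (m : ℕ) (x : Sq W (scale m)) (hx : x ∈ VH W m) :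
    sel W m (edges W (scale m) x) ∈ VH W m ∧
      edges W (scale m) (sel W m (edges W (scale m) x)) = edges W (scale m) x :=
  mkSel_spec W (scale m) (VH W m) (edges W (scale m) x) ⟨x, hx, rfl⟩

lemma sel_mem_SEL [Nonempty W.Tile] (m : ℕ) (x : Sq W (scale m)) (hx : x ∈ VH W m) :
    sel W m (edges W (scale m) x) ∈ SEL W m := by
  obtain ⟨h1, h2⟩ := sel_spec W m x hx
  exact ⟨h1, by rw [h2]⟩

lemma SEL_unique [Nonempty W.Tile] (m : ℕ) (x y : Sq W (scale m))
    (hx : x ∈ SEL W m) (hy : y ∈ SEL W m)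
    (h : edges W (scale m) x = edges W (scale m) y) : x = y := by
  rw [← hx.2, ← hy.2, h]

lemma SEL_quad [Nonempty W.Tile] (m : ℕ) (x : Sq W (scale (m + 1))) (hx : x ∈ SEL W (m + 1))
    (c d : Fin 2) : quad W (scale m) x c d ∈ SEL W m :=
  ((VH_succ_iff W m x).1 hx.1).2 c d

end WangAux
namespace WangAux

variable (W : WangTileSet)

lemma sqAt_valid (s : ℕ) (f : ℤ × ℤ → W.Tile) (hf : W.IsTiling f) (a b : ℤ) :
    SqValid W s (sqAt W s f a b) := by
  constructor
  · intro p q h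
    show W.east (f ((s : ℤ) * a + (p.1 : ℤ), (s : ℤ) * b + (q.1 : ℤ)))
      = W.west (f ((s : ℤ) * a + ((p.1 + 1 : ℕ) : ℤ), (s : ℤ) * b + (q.1 : ℤ)))
    have e : (s : ℤ) * a + ((p.1 + 1 : ℕ) : ℤ) = ((s : ℤ) * a + (p.1 : ℤ)) + 1 := by
      push_cast; ring
    rw [e]
    exact (hf _ _).1
  · intro p q h
    show W.north (f ((s : ℤ) * a + (p.1 : ℤ), (s : ℤ) * b + (q.1 : ℤ)))
      = W.south (f ((s : ℤ) * a + (p.1 : ℤ), (s : ℤ) * b + ((q.1 + 1 : ℕ) : ℤ)))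
    have e : (s : ℤ) * b + ((q.1 + 1 : ℕ) : ℤ) = ((s : ℤ) * b + (q.1 : ℤ)) + 1 := by
      push_cast; ring
    rw [e]
    exact (hf _ _).2

/-- Every aligned `scale m` square of `h` is a quadrant of an aligned `scale (m+1)` square. -/
lemma SEL_down [Nonempty W.Tile] (m : ℕ) (h : ℤ × ℤ → W.Tile)
    (H : ∀ a b : ℤ, sqAt W (scale (m + 1)) h a b ∈ SEL W (m + 1)) :
    ∀ a b : ℤ, sqAt W (scale m) h a b ∈ SEL W m := by
  intro a b
  have hc : (0 : ℤ) ≤ a % 2 ∧ a % 2 < 2 := ⟨Int.emod_nonneg a two_ne_zero, Int.emod_lt_of_pos a two_pos⟩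
  have hd : (0 : ℤ) ≤ b % 2 ∧ b % 2 < 2 := ⟨Int.emod_nonneg b two_ne_zero, Int.emod_lt_of_pos b two_pos⟩
  set c : Fin 2 := ⟨(a % 2).toNat, by omega⟩
  set d : Fin 2 := ⟨(b % 2).toNat, by omega⟩
  have ha : a = 2 * (a / 2) + (c.1 : ℤ) := by simp only [c]; omega
  have hb : b = 2 * (b / 2) + (d.1 : ℤ) := by simp only [d]; omega
  have key : sqAt W (scale m) h a b
      = quad W (scale m) (sqAt W (scale (m + 1)) h (a / 2) (b / 2)) c d := by
    rw [show sqAt W (scale (m + 1)) h (a / 2) (b / 2)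
        = sqAt W (2 * scale m) h (a / 2) (b / 2) from rfl]
    rw [quad_sqAt, ← ha, ← hb]
  rw [key]
  exact SEL_quad W m _ (H (a / 2) (b / 2)) c d

lemma SEL_down_le [Nonempty W.Tile] (h : ℤ × ℤ → W.Tile) :
    ∀ (k : ℕ), (∀ a b : ℤ, sqAt W (scale k) h a b ∈ SEL W k) →
      ∀ m, m ≤ k → ∀ a b : ℤ, sqAt W (scale m) h a b ∈ SEL W m := by
  intro k
  induction k with
  | zero =>
    intro H m hm
    rw [Nat.le_zero.1 hm]
    exact H
  | succ k ih =>
    intro H m hm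
    rcases Nat.lt_or_ge m (k + 1) with h' | h'
    · exact ih (SEL_down W k h H) m (by omega)
    · rw [show m = k + 1 by omega]
      exact H

/-- If all aligned squares one level down are canonical, aligned squares are in `VH`. -/
lemma sqAt_mem_VH [Nonempty W.Tile] (m : ℕ) (f : ℤ × ℤ → W.Tile) (hf : W.IsTiling f)
    (H : ∀ m' < m, ∀ a b : ℤ, sqAt W (scale m') f a b ∈ SEL W m') :
    ∀ a b : ℤ, sqAt W (scale m) f a b ∈ VH W m := by
  intro a b
  cases m with
  | zero => trivial
  | succ m =>
    rw [VH_succ_iff]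
    refine ⟨sqAt_valid W _ f hf a b, fun c d => ?_⟩
    rw [show sqAt W (scale (m + 1)) f a b = sqAt W (2 * scale m) f a b from rfl, quad_sqAt]
    exact H m (Nat.lt_succ_self m) _ _

noncomputable def canonSeq [Nonempty W.Tile] (f0 : ℤ × ℤ → W.Tile) : ℕ → (ℤ × ℤ → W.Tile)
  | 0 => f0
  | k + 1 => resurf W (scale k) (scale_pos k)
      (fun x => sel W k (edges W (scale k) x)) (canonSeq f0 k)

lemma canonSeq_spec [Nonempty W.Tile] (f0 : ℤ × ℤ → W.Tile) (hf0 : W.IsTiling f0) :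
    ∀ k : ℕ, W.IsTiling (canonSeq W f0 k) ∧
      ∀ m, m < k → ∀ a b : ℤ, sqAt W (scale m) (canonSeq W f0 k) a b ∈ SEL W m := by
  intro k
  induction k with
  | zero => exact ⟨hf0, fun m hm => absurd hm (Nat.not_lt_zero m)⟩
  | succ k ih =>
    obtain ⟨htil, hsel⟩ := ih
    have hVH : ∀ a b : ℤ, sqAt W (scale k) (canonSeq W f0 k) a b ∈ VH W k :=
      sqAt_mem_VH W k _ htil (fun m' hm' => hsel m' hm')
    have htil' : W.IsTiling (canonSeq W f0 (k + 1)) := by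
      apply resurf_tiling W (scale k) (scale_pos k) _ _ htil
      · intro a b
        exact VH_valid W k _ (sel_spec W k _ (hVH a b)).1
      · intro a b
        exact (sel_spec W k _ (hVH a b)).2
    have htop : ∀ a b : ℤ, sqAt W (scale k) (canonSeq W f0 (k + 1)) a b ∈ SEL W k := by
      intro a b
      rw [show canonSeq W f0 (k + 1) = resurf W (scale k) (scale_pos k)
          (fun x => sel W k (edges W (scale k) x)) (canonSeq W f0 k) from rfl]
      rw [sqAt_resurf]
      exact sel_mem_SEL W k _ (hVH a b)
    exact ⟨htil', fun m hm => SEL_down_le W _ k htop m (by omega)⟩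

end WangAux
namespace WangAux

variable (W : WangTileSet)

lemma exists_canonical_tiling [Nonempty W.Tile] (f0 : ℤ × ℤ → W.Tile)
    (hf0 : W.IsTiling f0) :
    ∃ f : ℤ × ℤ → W.Tile, W.IsTiling f ∧
      ∀ (m : ℕ) (a b : ℤ), sqAt W (scale m) f a b ∈ SEL W m := by
  set U : Ultrafilter ℕ := Ultrafilter.of Filter.atTop with hUdef
  have hU : (U : Filter ℕ) ≤ Filter.atTop := Ultrafilter.of_le _
  have key : ∀ p : ℤ × ℤ, ∃ t : W.Tile, {k | canonSeq W f0 k p = t} ∈ U := by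
    intro p
    by_contra hc
    push_neg at hc
    have h1 : ∀ t : W.Tile, {k | canonSeq W f0 k p = t}ᶜ ∈ U := fun t =>
      (Ultrafilter.compl_mem_iff_notMem).2 (hc t)
    have h2 : (⋂ t : W.Tile, {k | canonSeq W f0 k p = t}ᶜ) ∈ U :=
      Filter.iInter_mem.2 h1
    obtain ⟨k, hk⟩ := Filter.nonempty_of_mem h2
    exact (Set.mem_iInter.1 hk (canonSeq W f0 k p)) rfl
  choose F hF using key
  have agree : ∀ (S : Finset (ℤ × ℤ)) (K : ℕ),
      ∃ k, K ≤ k ∧ ∀ p ∈ S, canonSeq W f0 k p = F p := by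
    intro S K
    have h1 : (⋂ p ∈ S, {k | canonSeq W f0 k p = F p}) ∈ U :=
      (Filter.biInter_finset_mem S).2 (fun p _ => hF p)
    have h2 : Set.Ici K ∈ (U : Filter ℕ) := hU (Filter.mem_atTop K)
    obtain ⟨k, hk1, hk2⟩ := Filter.nonempty_of_mem (Filter.inter_mem h2 h1)
    exact ⟨k, hk1, fun p hp => Set.mem_iInter₂.1 hk2 p hp⟩
  refine ⟨F, ?_, ?_⟩
  · intro i j
    obtain ⟨k, -, hk⟩ := agree {(i, j), (i + 1, j), (i, j + 1)} 0
    rw [← hk (i, j) (by simp), ← hk (i + 1, j) (by simp), ← hk (i, j + 1) (by simp)]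
    exact (canonSeq_spec W f0 hf0 k).1 i j
  · intro m a b
    set S : Finset (ℤ × ℤ) := Finset.image
      (fun p : Fin (scale m) × Fin (scale m) =>
        ((scale m : ℤ) * a + (p.1.1 : ℤ), (scale m : ℤ) * b + (p.2.1 : ℤ)))
      Finset.univ with hS
    obtain ⟨k, hk0, hk⟩ := agree S (m + 1)
    have heq : sqAt W (scale m) F a b = sqAt W (scale m) (canonSeq W f0 k) a b := by
      funext p
      exact (hk _ (Finset.mem_image_of_mem _ (Finset.mem_univ p))).symm
    rw [heq]
    exact (canonSeq_spec W f0 hf0 k).2 m (by omega) a b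

end WangAux
namespace WangAux

variable (W : WangTileSet)

lemma block_count [Nonempty W.Tile] (f : ℤ × ℤ → W.Tile) (m n : ℕ) (hn : 0 < n)
    (hns : n ≤ scale m)
    (hsel : ∀ a b : ℤ, sqAt W (scale m) f a b ∈ SEL W m) :
    {x : Fin n × Fin n → W.Tile | ∃ i j : ℤ, x = W.block f n i j}.ncard
      ≤ scale m * scale m * Fintype.card W.Color ^ (16 * scale m) := by
  classical
  set s := scale m with hsdef
  have hs : 0 < s := scale_pos m
  set B := {x : Fin n × Fin n → W.Tile | ∃ i j : ℤ, x = W.block f n i j} with hB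
  -- the decoding data
  have hch : ∀ x : B, ∃ ij : ℤ × ℤ, x.1 = W.block f n ij.1 ij.2 := by
    rintro ⟨x, i, j, hx⟩
    exact ⟨(i, j), hx⟩
  choose ij hij using hch
  let Ω := (Fin s × Fin s) × (Fin 2 × Fin 2 → EData W s)
  let ψ : B → Ω := fun x =>
    ((coordFin s hs (ij x).1, coordFin s hs (ij x).2),
      fun cd => edges W s (sqAt W s f ((ij x).1 / (s : ℤ) + (cd.1.1 : ℤ))
        ((ij x).2 / (s : ℤ) + (cd.2.1 : ℤ))))
  -- main decomposition claim
  have main : ∀ (i : ℤ) (pv : ℕ) (hpv : pv < n),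
      ∃ (cv : ℕ) (hcv : cv < 2) (w : ℕ) (hw : w < s),
        w = ((i % (s : ℤ)).toNat + pv) % s ∧ cv = ((i % (s : ℤ)).toNat + pv) / s ∧
        i + (pv : ℤ) = (s : ℤ) * (i / (s : ℤ) + (cv : ℤ)) + (w : ℤ) := by
    intro i pv hpv
    have hs' : ((s : ℤ)) ≠ 0 := by exact_mod_cast hs.ne'
    have hmodnn : 0 ≤ i % (s : ℤ) := Int.emod_nonneg i hs'
    have hmodlt : i % (s : ℤ) < s := Int.emod_lt_of_pos i (by exact_mod_cast hs)
    set r := (i % (s : ℤ)).toNat with hrdef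
    have hr : r < s := by omega
    set u := r + pv with hudef
    have hu : u < 2 * s := by omega
    refine ⟨u / s, ?_, u % s, Nat.mod_lt u hs, rfl, rfl, ?_⟩
    · exact (Nat.div_lt_iff_lt_mul hs).2 (by omega)
    · have h1 : (s : ℤ) * (i / (s : ℤ)) + i % (s : ℤ) = i := Int.mul_ediv_add_emod i s
      have h2 : ((r : ℕ) : ℤ) = i % (s : ℤ) := Int.toNat_of_nonneg hmodnn
      have h3 : s * (u / s) + u % s = u := Nat.div_add_mod u s
      have h3' : (s : ℤ) * ((u / s : ℕ) : ℤ) + ((u % s : ℕ) : ℤ) = (u : ℤ) := by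
        exact_mod_cast h3
      have hdist : (s : ℤ) * (i / (s : ℤ) + ((u / s : ℕ) : ℤ))
          = (s : ℤ) * (i / (s : ℤ)) + (s : ℤ) * ((u / s : ℕ) : ℤ) := by ring
      have hu' : (u : ℤ) = (r : ℤ) + (pv : ℤ) := by exact_mod_cast hudef
      omega
  -- injectivity
  have hinj : Function.Injective ψ := by
    intro x y hxy
    have h1 : coordFin s hs (ij x).1 = coordFin s hs (ij y).1 :=
      congrArg (fun z => z.1.1) hxy
    have h2 : coordFin s hs (ij x).2 = coordFin s hs (ij y).2 :=
      congrArg (fun z => z.1.2) hxy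
    have h3 : ∀ cd : Fin 2 × Fin 2,
        edges W s (sqAt W s f ((ij x).1 / (s : ℤ) + (cd.1.1 : ℤ))
          ((ij x).2 / (s : ℤ) + (cd.2.1 : ℤ)))
        = edges W s (sqAt W s f ((ij y).1 / (s : ℤ) + (cd.1.1 : ℤ))
          ((ij y).2 / (s : ℤ) + (cd.2.1 : ℤ))) := by
      intro cd
      exact congrFun (congrArg (fun z => z.2) hxy) cd
    have hm1 : ((ij x).1 % (s : ℤ)).toNat = ((ij y).1 % (s : ℤ)).toNat :=
      congrArg Fin.val h1
    have hm2 : ((ij x).2 % (s : ℤ)).toNat = ((ij y).2 % (s : ℤ)).toNat :=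
      congrArg Fin.val h2
    apply Subtype.ext
    rw [hij x, hij y]
    funext p
    show f ((ij x).1 + ((p.1 : ℕ) : ℤ), (ij x).2 + ((p.2 : ℕ) : ℤ))
      = f ((ij y).1 + ((p.1 : ℕ) : ℤ), (ij y).2 + ((p.2 : ℕ) : ℤ))
    obtain ⟨c1, hc1, w1, hw1, hwx1, hcx1, hx1⟩ := main (ij x).1 p.1.1 p.1.2
    obtain ⟨d1, hd1, v1, hv1, hwx2, hcx2, hx2⟩ := main (ij x).2 p.2.1 p.2.2
    obtain ⟨c2, hc2, w2, hw2, hwy1, hcy1, hy1⟩ := main (ij y).1 p.1.1 p.1.2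
    obtain ⟨d2, hd2, v2, hv2, hwy2, hcy2, hy2⟩ := main (ij y).2 p.2.1 p.2.2
    have hcc : c1 = c2 := by rw [hcx1, hcy1, hm1]
    have hdd : d1 = d2 := by rw [hcx2, hcy2, hm2]
    have hww : w1 = w2 := by rw [hwx1, hwy1, hm1]
    have hvv : v1 = v2 := by rw [hwx2, hwy2, hm2]
    have hQx : sqAt W s f ((ij x).1 / (s : ℤ) + (c1 : ℤ)) ((ij x).2 / (s : ℤ) + (d1 : ℤ))
        ∈ SEL W m := hsel _ _
    have hQy : sqAt W s f ((ij y).1 / (s : ℤ) + (c2 : ℤ)) ((ij y).2 / (s : ℤ) + (d2 : ℤ))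
        ∈ SEL W m := hsel _ _
    have hQ : sqAt W s f ((ij x).1 / (s : ℤ) + (c1 : ℤ)) ((ij x).2 / (s : ℤ) + (d1 : ℤ))
        = sqAt W s f ((ij y).1 / (s : ℤ) + (c2 : ℤ)) ((ij y).2 / (s : ℤ) + (d2 : ℤ)) := by
      apply SEL_unique W m _ _ hQx hQy
      have := h3 (⟨c1, hc1⟩, ⟨d1, hd1⟩)
      simpa [hcc, hdd] using this
    have ex : f ((ij x).1 + ((p.1 : ℕ) : ℤ), (ij x).2 + ((p.2 : ℕ) : ℤ))
        = sqAt W s f ((ij x).1 / (s : ℤ) + (c1 : ℤ)) ((ij x).2 / (s : ℤ) + (d1 : ℤ))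
          (⟨w1, hw1⟩, ⟨v1, hv1⟩) := by
      show _ = f ((s : ℤ) * ((ij x).1 / (s : ℤ) + (c1 : ℤ)) + ((w1 : ℕ) : ℤ),
        (s : ℤ) * ((ij x).2 / (s : ℤ) + (d1 : ℤ)) + ((v1 : ℕ) : ℤ))
      rw [← hx1, ← hx2]
    have ey : f ((ij y).1 + ((p.1 : ℕ) : ℤ), (ij y).2 + ((p.2 : ℕ) : ℤ))
        = sqAt W s f ((ij y).1 / (s : ℤ) + (c2 : ℤ)) ((ij y).2 / (s : ℤ) + (d2 : ℤ))
          (⟨w2, hw2⟩, ⟨v2, hv2⟩) := by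
      show _ = f ((s : ℤ) * ((ij y).1 / (s : ℤ) + (c2 : ℤ)) + ((w2 : ℕ) : ℤ),
        (s : ℤ) * ((ij y).2 / (s : ℤ) + (d2 : ℤ)) + ((v2 : ℕ) : ℤ))
      rw [← hy1, ← hy2]
    rw [ex, ey, hQ]
    exact congrArg _ (Prod.ext (Fin.ext hww) (Fin.ext hvv))
  -- cardinality chase
  have hcard : Nat.card B ≤ Nat.card Ω := Nat.card_le_card_of_injective ψ hinj
  have hΩ : Nat.card Ω = s * s * Fintype.card W.Color ^ (16 * s) := by
    rw [Nat.card_eq_fintype_card]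
    show Fintype.card ((Fin s × Fin s) × (Fin 2 × Fin 2 → EData W s)) = _
    rw [Fintype.card_prod, Fintype.card_prod, Fintype.card_fin, Fintype.card_fun]
    congr 1
    have hE : Fintype.card (EData W s) = Fintype.card W.Color ^ (4 * s) := by
      show Fintype.card ((Fin s → W.Color) × (Fin s → W.Color) × (Fin s → W.Color)
        × (Fin s → W.Color)) = _
      rw [Fintype.card_prod, Fintype.card_prod, Fintype.card_prod, Fintype.card_fun,
        Fintype.card_fin, ← pow_add, ← pow_add, ← pow_add]
      congr 1
      ring
    rw [hE, Fintype.card_prod, Fintype.card_fin, ← pow_mul]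
    congr 1
    ring
  calc Set.ncard B = Nat.card B := (Nat.card_coe_set_eq B).symm
    _ ≤ Nat.card Ω := hcard
    _ = s * s * Fintype.card W.Color ^ (16 * s) := hΩ

lemma numeric (s n c : ℕ) (hn : 1 ≤ n) (hsn : s ≤ 2 * n) :
    s * s * c ^ (16 * s) ≤ 2 ^ ((32 * c + 4) * n) := by
  have h1 : s ≤ 2 ^ (2 * n) := le_trans hsn (Nat.lt_two_pow_self (n := 2 * n)).le
  have h2 : c ^ (16 * s) ≤ 2 ^ (32 * c * n) := by
    calc c ^ (16 * s) ≤ (2 ^ c) ^ (16 * s) :=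
          Nat.pow_le_pow_left (Nat.lt_two_pow_self (n := c)).le _
      _ = 2 ^ (c * (16 * s)) := by rw [← pow_mul]
      _ ≤ 2 ^ (32 * c * n) := Nat.pow_le_pow_right (by norm_num) (by nlinarith)
  calc s * s * c ^ (16 * s) ≤ (2 ^ (2 * n) * 2 ^ (2 * n)) * 2 ^ (32 * c * n) :=
        Nat.mul_le_mul (Nat.mul_le_mul h1 h1) h2
    _ = 2 ^ (2 * n + 2 * n + 32 * c * n) := by rw [← pow_add, ← pow_add]
    _ ≤ 2 ^ ((32 * c + 4) * n) := Nat.pow_le_pow_right (by norm_num) (by nlinarith)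

lemma scale_clog_le (n : ℕ) (hn : 1 ≤ n) : scale (Nat.clog 2 n) ≤ 2 * n := by
  rw [scale_eq]
  rcases Nat.lt_or_ge n 2 with h | h
  · have : n = 1 := by omega
    subst this
    simp [Nat.clog_one_right]
  · have h1 : 1 < n := by omega
    have h2 : 2 ^ (Nat.clog 2 n - 1) < n := Nat.pow_pred_clog_lt_self one_lt_two h1
    have h3 : 0 < Nat.clog 2 n := Nat.clog_pos one_lt_two h1
    have h4 : 2 ^ Nat.clog 2 n = 2 * 2 ^ (Nat.clog 2 n - 1) := by
      rw [← pow_succ']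
      congr 1
      omega
    omega

end WangAux
/-- Every Wang tile set admitting a tiling of the plane admits a tiling in which the number
of distinct `n × n` blocks is `2^(O(n))`. -/
theorem exists_tiling_few_blocks (W : WangTileSet)
    (hW : ∃ f : ℤ × ℤ → W.Tile, W.IsTiling f) :
    ∃ f : ℤ × ℤ → W.Tile, W.IsTiling f ∧ ∃ C : ℕ,
      ∀ n : ℕ, 1 ≤ n →
        {x : Fin n × Fin n → W.Tile | ∃ i j : ℤ, x = W.block f n i j}.ncard ≤ 2 ^ (C * n) := by
  obtain ⟨f0, hf0⟩ := hW
  haveI : Nonempty W.Tile := ⟨f0 (0, 0)⟩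
  obtain ⟨f, hf, hsel⟩ := WangAux.exists_canonical_tiling W f0 hf0
  refine ⟨f, hf, 32 * Fintype.card W.Color + 4, ?_⟩
  intro n hn
  set m := Nat.clog 2 n with hm
  have hns : n ≤ WangAux.scale m := by
    rw [WangAux.scale_eq]
    exact Nat.le_pow_clog one_lt_two n
  calc {x : Fin n × Fin n → W.Tile | ∃ i j : ℤ, x = W.block f n i j}.ncard
      ≤ WangAux.scale m * WangAux.scale m
          * Fintype.card W.Color ^ (16 * WangAux.scale m) :=
        WangAux.block_count W f m n hn hns (hsel m)
    _ ≤ 2 ^ ((32 * Fintype.card W.Color + 4) * n) :=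
        WangAux.numeric (WangAux.scale m) n (Fintype.card W.Color) hn
          (WangAux.scale_clog_le n hn)
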